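/- For integers n ≥ 1 and p ≥ 1, the Grundy domination number of the Sierpiński graph S_p^n is γ_gr(S_p^n) = p^{n-1} + p(p^{n-1} - 1)/2. -/

import Mathlib

/-- The closed neighborhood `N[v] = {v} ∪ N(v)` of a vertex. -/
def closedNbhd {V : Type*} (G : SimpleGraph V) (v : V) : Set V :=
  insert v (G.neighborSet v)

/-- A sequence (list) of pairwise distinct vertices is legal if each vertex
footprints some vertex not dominated by the previous ones. -/
def IsLegalSeq {V : Type*} (G : SimpleGraph V) (l : List V) : Prop :=
  l.Nodup ∧ ∀ i : Fin l.length, ∃ u,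
    u ∈ closedNbhd G (l.get i) ∧
    ∀ j : Fin l.length, (j : ℕ) < (i : ℕ) → u ∉ closedNbhd G (l.get j)

/-- A legal dominating sequence. -/
def IsDomSeq {V : Type*} (G : SimpleGraph V) (l : List V) : Prop :=
  IsLegalSeq G l ∧ ∀ u : V, ∃ v ∈ l, u ∈ closedNbhd G v

/-- The Grundy domination number: the maximum length of a legal dominating sequence. -/
noncomputable def grundyDomNum {V : Type*} (G : SimpleGraph V) : ℕ :=
  sSup {k : ℕ | ∃ l : List V, IsDomSeq G l ∧ l.length = k}

/-- The Sierpiński graph `S_p^n` on vertex set `{0,…,p-1}^n`: two distinct vertices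
`u` and `v` are adjacent iff there is a coordinate `h` with `u t = v t` for `t < h`,
`u h ≠ v h`, and `u t = v h`, `v t = u h` for all `t > h`. -/
def sierpinskiGraph (p n : ℕ) : SimpleGraph (Fin n → Fin p) :=
  SimpleGraph.fromRel (fun u v => ∃ h : Fin n,
    (∀ t : Fin n, t < h → u t = v t) ∧ u h ≠ v h ∧
    (∀ t : Fin n, h < t → u t = v h ∧ v t = u h))

namespace GrundySier

variable {p : ℕ}

/-- constant vertex (an "extreme" vertex). -/
def cst (p n : ℕ) (j : Fin p) : Fin n → Fin p := fun _ => j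

def SRel (p n : ℕ) (u v : Fin n → Fin p) : Prop := ∃ h : Fin n,
    (∀ t : Fin n, t < h → u t = v t) ∧ u h ≠ v h ∧
    (∀ t : Fin n, h < t → u t = v h ∧ v t = u h)

lemma sier_adj {n : ℕ} (u v : Fin n → Fin p) :
    (sierpinskiGraph p n).Adj u v ↔ u ≠ v ∧ (SRel p n u v ∨ SRel p n v u) := by
  simp [sierpinskiGraph, SimpleGraph.fromRel_adj, SRel]

lemma srel_cons {n : ℕ} (i j : Fin p) (x y : Fin n → Fin p) :
    SRel p (n+1) (Fin.cons i x) (Fin.cons j y) ↔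
      (i ≠ j ∧ x = cst p n j ∧ y = cst p n i) ∨ (i = j ∧ SRel p n x y) := by
  constructor
  · rintro ⟨h, h1, h2, h3⟩
    rcases Fin.eq_zero_or_eq_succ h with rfl | ⟨k, rfl⟩
    · left
      refine ⟨by simpa using h2, ?_, ?_⟩
      · funext t
        simpa [cst] using (h3 t.succ t.succ_pos).1
      · funext t
        simpa [cst] using (h3 t.succ t.succ_pos).2
    · right
      refine ⟨by simpa using h1 0 k.succ_pos, k, ?_, by simpa using h2, ?_⟩
      · intro t ht
        simpa using h1 t.succ (by simpa [Fin.succ_lt_succ_iff] using ht)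
      · intro t ht
        simpa using h3 t.succ (by simpa [Fin.succ_lt_succ_iff] using ht)
  · rintro (⟨hij, rfl, rfl⟩ | ⟨rfl, k, h1, h2, h3⟩)
    · refine ⟨0, by simp, by simpa using hij, ?_⟩
      intro t ht
      rcases Fin.eq_zero_or_eq_succ t with rfl | ⟨s, rfl⟩
      · simp at ht
      · simp [cst]
    · refine ⟨k.succ, ?_, by simpa using h2, ?_⟩
      · intro t ht
        rcases Fin.eq_zero_or_eq_succ t with rfl | ⟨s, rfl⟩
        · simp
        · simpa using h1 s (by simpa [Fin.succ_lt_succ_iff] using ht)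
      · intro t ht
        rcases Fin.eq_zero_or_eq_succ t with rfl | ⟨s, rfl⟩
        · exact absurd ht (by simp [Fin.lt_def])
        · simpa using h3 s (by simpa [Fin.succ_lt_succ_iff] using ht)

lemma cons_eq_cons {n : ℕ} {i j : Fin p} {x y : Fin n → Fin p} :
    (Fin.cons i x : Fin (n+1) → Fin p) = Fin.cons j y ↔ i = j ∧ x = y := by
  constructor
  · intro h
    refine ⟨by simpa using congrFun h 0, funext fun t => by simpa using congrFun h t.succ⟩
  · rintro ⟨rfl, rfl⟩; rfl

lemma adj_cons {n : ℕ} (i j : Fin p) (x y : Fin n → Fin p) :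
    (sierpinskiGraph p (n+1)).Adj (Fin.cons i x) (Fin.cons j y) ↔
      (i = j ∧ (sierpinskiGraph p n).Adj x y) ∨
      (i ≠ j ∧ x = cst p n j ∧ y = cst p n i) := by
  rw [sier_adj, srel_cons, srel_cons, sier_adj]
  constructor
  · rintro ⟨hne, h⟩
    have hxyne : ∀ (_ : i = j), x ≠ y := by
      rintro rfl hxy; exact hne (by rw [hxy])
    by_cases hij : i = j
    · subst hij
      rcases h with (⟨h,_⟩|⟨_,h⟩)|(⟨h,_⟩|⟨_,h⟩)
      · exact absurd rfl h
      · exact Or.inl ⟨rfl, hxyne rfl, Or.inl h⟩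
      · exact absurd rfl h
      · exact Or.inl ⟨rfl, hxyne rfl, Or.inr h⟩
    · right
      rcases h with (⟨_,h1,h2⟩|⟨h,_⟩)|(⟨_,h1,h2⟩|⟨h,_⟩)
      · exact ⟨hij, h1, h2⟩
      · exact absurd h hij
      · exact ⟨hij, h2, h1⟩
      · exact absurd h.symm hij
  · rintro (⟨rfl, hne, h⟩ | ⟨hij, rfl, rfl⟩)
    · exact ⟨fun hc => hne (cons_eq_cons.mp hc).2, by tauto⟩
    · refine ⟨fun hc => hij (cons_eq_cons.mp hc).1, Or.inl (Or.inl ⟨hij, rfl, rfl⟩)⟩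

end GrundySier
section Part2
namespace GrundySier
variable {p : ℕ}

lemma mem_closedNbhd {W : Type*} {G : SimpleGraph W} {u v : W} :
    u ∈ closedNbhd G v ↔ u = v ∨ G.Adj v u := by
  simp [closedNbhd, SimpleGraph.mem_neighborSet]

lemma mem_closedNbhd_self {W : Type*} {G : SimpleGraph W} {v : W} :
    v ∈ closedNbhd G v := mem_closedNbhd.mpr (Or.inl rfl)

lemma mem_cn_cons_same {n : ℕ} {i : Fin p} {a b : Fin n → Fin p} :
    (Fin.cons i a : Fin (n+1) → Fin p) ∈ closedNbhd (sierpinskiGraph p (n+1)) (Fin.cons i b) ↔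
      a ∈ closedNbhd (sierpinskiGraph p n) b := by
  rw [mem_closedNbhd, mem_closedNbhd, cons_eq_cons, adj_cons]
  simp

lemma mem_cn_cons_ne {n : ℕ} {i j : Fin p} (hij : i ≠ j) {a b : Fin n → Fin p} :
    (Fin.cons j a : Fin (n+1) → Fin p) ∈ closedNbhd (sierpinskiGraph p (n+1)) (Fin.cons i b) ↔
      b = cst p n j ∧ a = cst p n i := by
  rw [mem_closedNbhd, cons_eq_cons, adj_cons]
  simp [hij, Ne.symm hij, (Ne.symm hij : ¬ j = i)]

lemma mem_cn_one (u v : Fin 1 → Fin p) :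
    u ∈ closedNbhd (sierpinskiGraph p 1) v := by
  rw [mem_closedNbhd]
  by_cases h : u = v
  · exact Or.inl h
  · right
    rw [sier_adj]
    have h0 : v 0 ≠ u 0 := by
      intro he
      exact h (funext fun t => by rw [Subsingleton.elim t 0, he])
    refine ⟨Ne.symm h, Or.inl ⟨0, ?_, h0, ?_⟩⟩
    · intro t ht; exact absurd ht (by simp [Fin.lt_def, Fin.ext_iff, Subsingleton.elim t 0])
    · intro t ht; exact absurd ht (by simp [Fin.lt_def, Fin.ext_iff, Subsingleton.elim t 0])

/-- The target value. -/
def gdn (p n : ℕ) : ℕ := p ^ (n - 1) + p * (p ^ (n - 1) - 1) / 2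

lemma gdn_one : gdn p 1 = 1 := by simp [gdn]

lemma two_dvd_aux (p k : ℕ) : 2 ∣ p * (p ^ k - 1) := by
  rcases Nat.even_or_odd p with h | h
  · exact Dvd.dvd.mul_right h.two_dvd _
  · have h1 : Odd (p ^ k) := h.pow
    have h2 : Even (p ^ k - 1) := Nat.Odd.sub_odd h1 odd_one
    exact Dvd.dvd.mul_left h2.two_dvd _

lemma gdn_succ (hp : 1 ≤ p) {n : ℕ} (hn : 1 ≤ n) :
    gdn p (n + 1) = p * gdn p n + p.choose 2 := by
  rcases n with _ | k
  · omega
  show gdn p (k + 2) = p * gdn p (k + 1) + p.choose 2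
  have e1 : k + 2 - 1 = k + 1 := rfl
  have e2 : k + 1 - 1 = k := rfl
  rw [gdn, gdn, e1, e2, Nat.choose_two_right]
  have hpk : 1 ≤ p ^ k := Nat.one_le_pow _ _ (by omega)
  have hpow : p ^ (k+1) = p * p ^ k := by rw [pow_succ, mul_comm]
  have h1 : 2 ∣ p * (p ^ k - 1) := two_dvd_aux p k
  have h2 : 2 ∣ p * (p - 1) := by simpa using two_dvd_aux p 1
  have key : p * (p ^ (k+1) - 1) = p * (p * (p ^ k - 1)) + p * (p - 1) := by
    have e3 : p ^ (k+1) - 1 = p * (p ^ k - 1) + (p - 1) := by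
      have := Nat.mul_le_mul_left p hpk
      rw [hpow]
      have : p * (p ^ k - 1) = p * p ^ k - p := by
        rw [Nat.mul_sub]; ring_nf
      omega
    rw [e3, Nat.mul_add]
  have h3 : p * (p * (p ^ k - 1) / 2) = p * (p * (p ^ k - 1)) / 2 :=
    (Nat.mul_div_assoc p h1).symm
  have h4 : 2 ∣ p * (p * (p ^ k - 1)) := Dvd.dvd.mul_left h1 p
  generalize hq : p * (p * (p ^ k - 1)) = q at *
  generalize hc : p * (p - 1) = c at *
  generalize ha : p * (p ^ (k+1) - 1) = a at *
  rw [Nat.mul_add, h3, hpow]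
  omega

/-- staircase: list of (vertex, footprint) pairs. -/
def Stair {W : Type*} (G : SimpleGraph W) (s : List (W × W)) : Prop :=
  (∀ x ∈ s, x.2 ∈ closedNbhd G x.1) ∧
  s.Pairwise (fun a b => b.2 ∉ closedNbhd G a.1)

lemma Stair.sublist {W : Type*} {G : SimpleGraph W} {s s' : List (W × W)}
    (hs : s'.Sublist s) (h : Stair G s) : Stair G s' :=
  ⟨fun x hx => h.1 x (hs.subset hx), h.2.sublist hs⟩

end GrundySier
end Part2
section Part3
namespace GrundySier
variable {p : ℕ}

lemma legal_to_stair {W : Type*} {G : SimpleGraph W} {l : List W}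
    (h : IsLegalSeq G l) : ∃ s, Stair G s ∧ s.length = l.length := by
  obtain ⟨hnd, hleg⟩ := h
  choose f hf1 hf2 using hleg
  refine ⟨(List.finRange l.length).map (fun i => (l.get i, f i)), ⟨?_, ?_⟩, by simp⟩
  · rintro x hx
    simp only [List.mem_map] at hx
    obtain ⟨i, _, rfl⟩ := hx
    exact hf1 i
  · rw [List.pairwise_map]
    refine (List.pairwise_lt_finRange l.length).imp_of_mem ?_
    intro a b _ _ hab
    exact hf2 b a hab

/-- partition counting -/
lemma sum_classes {W : Type*} (f : W → Fin p) :
    ∀ s : List W, (∑ c : Fin p, (s.filter (fun x => f x = c)).length)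
      = s.length := by
  intro s
  induction s with
  | nil => simp
  | cons a t ih =>
    simp only [List.filter_cons]
    have : ∀ c : Fin p, (if (f a = c : Bool) then a :: t.filter (fun x => f x = c)
        else t.filter (fun x => f x = c)).length
        = (if f a = c then 1 else 0) + (t.filter (fun x => f x = c)).length := by
      intro c
      by_cases h : f a = c <;> simp [h, Nat.add_comm]
    rw [Finset.sum_congr rfl (fun c _ => this c), Finset.sum_add_distrib, ih]
    simp [List.length_cons, Finset.sum_ite_eq' Finset.univ (f a) (fun _ => 1)]
    omega

lemma stair_length_le (hp : 0 < p) : ∀ n, 1 ≤ n →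
    ∀ s : List ((Fin n → Fin p) × (Fin n → Fin p)),
      Stair (sierpinskiGraph p n) s → s.length ≤ gdn p n := by
  refine Nat.le_induction ?_ ?_
  · rintro s hs
    rw [gdn_one]
    match s, hs with
    | [], _ => simp
    | [x], _ => simp
    | x :: y :: t, hs =>
      exfalso
      have := (List.pairwise_cons.mp hs.2).1 y (by simp)
      exact this (mem_cn_one y.2 x.1)
  · intro n hn IH s hs
    classical
    set cr := s.filter (fun x => ¬ (x.1 0 = x.2 0)) with hcr
    set it : Fin p → List ((Fin (n+1) → Fin p) × (Fin (n+1) → Fin p)) :=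
      fun c => (s.filter (fun x => x.1 0 = x.2 0)).filter
        (fun x => x.1 0 = c) with hit
    have hlen : s.length = (∑ c : Fin p, (it c).length) + cr.length := by
      rw [hit, sum_classes (fun x : (Fin (n+1) → Fin p) × (Fin (n+1) → Fin p) => x.1 0)]
      rw [List.length_eq_countP_add_countP (fun x : (Fin (n+1) → Fin p) × (Fin (n+1) → Fin p) => decide (x.1 0 = x.2 0)) (l := s),
        List.countP_eq_length_filter, List.countP_eq_length_filter]
      simp [hcr]
    -- internal bound
    have hint : ∀ c : Fin p, (it c).length ≤ gdn p n := by
      intro c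
      have hsub : (it c).Sublist s := by
        rw [hit]
        exact List.filter_sublist.trans List.filter_sublist
      have hstair : Stair (sierpinskiGraph p (n+1)) (it c) := hs.sublist hsub
      have hmem : ∀ x ∈ it c, x.1 0 = c ∧ x.2 0 = c := by
        intro x hx
        rw [hit] at hx
        simp only [List.mem_filter, decide_eq_true_eq] at hx
        exact ⟨hx.2, hx.2 ▸ hx.1.2.symm⟩
      have key : Stair (sierpinskiGraph p n)
          ((it c).map (fun x => (Fin.tail x.1, Fin.tail x.2))) := by
        constructor
        · rintro y hy
          simp only [List.mem_map] at hy
          obtain ⟨x, hx, rfl⟩ := hy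
          obtain ⟨h1, h2⟩ := hmem x hx
          have hm := hstair.1 x hx
          rw [← Fin.cons_self_tail x.1, ← Fin.cons_self_tail x.2, h1, h2] at hm
          exact mem_cn_cons_same.mp hm
        · rw [List.pairwise_map]
          refine hstair.2.imp_of_mem ?_
          intro a b ha hb hab hmem2
          obtain ⟨ha1, ha2⟩ := hmem a ha
          obtain ⟨hb1, hb2⟩ := hmem b hb
          apply hab
          rw [← Fin.cons_self_tail b.2, ← Fin.cons_self_tail a.1, hb2, ha1]
          exact mem_cn_cons_same.mpr hmem2
      have := IH _ key
      simpa using this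
    -- cross shape
    have hshape : ∀ x ∈ cr, x.1 = Fin.cons (x.1 0) (cst p n (x.2 0)) ∧
        x.2 = Fin.cons (x.2 0) (cst p n (x.1 0)) ∧ x.1 0 ≠ x.2 0 := by
      intro x hx
      rw [hcr] at hx
      simp only [List.mem_filter, decide_eq_true_eq] at hx
      obtain ⟨hxs, hne⟩ := hx
      have hm := hs.1 x hxs
      rw [← Fin.cons_self_tail x.1, ← Fin.cons_self_tail x.2] at hm
      rw [mem_cn_cons_ne (fun h => hne h)] at hm
      refine ⟨?_, ?_, hne⟩
      · conv_lhs => rw [← Fin.cons_self_tail x.1]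
        rw [hm.1]
      · conv_lhs => rw [← Fin.cons_self_tail x.2]
        rw [hm.2]
    have hcross : cr.length ≤ p.choose 2 := by
      set φ : ((Fin (n+1) → Fin p) × (Fin (n+1) → Fin p)) → Finset (Fin p) :=
        fun x => {x.1 0, x.2 0} with hφ
      have hnd : (cr.map φ).Nodup := by
        rw [List.Nodup, List.pairwise_map]
        refine ((hs.2.sublist List.filter_sublist).imp_of_mem ?_)
        intro a b ha hb hab heq
        obtain ⟨ha1, ha2, hane⟩ := hshape a ha
        obtain ⟨hb1, hb2, hbne⟩ := hshape b hb
        have hb1m : b.1 0 ∈ φ a := by rw [heq]; simp [hφ]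
        have hb2m : b.2 0 ∈ φ a := by rw [heq]; simp [hφ]
        simp only [hφ, Finset.mem_insert, Finset.mem_singleton] at hb1m hb2m
        rcases hb1m with h1 | h1
        · have h2 : b.2 0 = a.2 0 := by
            rcases hb2m with h2 | h2
            · exact absurd (h2.trans h1.symm).symm hbne
            · exact h2
          apply hab
          have hea2 : b.2 = a.2 := by rw [hb2, ha2, h1, h2]
          rw [hea2]
          exact hs.1 a (List.filter_sublist.subset ha)
        · have h2 : b.2 0 = a.1 0 := by
            rcases hb2m with h2 | h2
            · exact h2
            · exact absurd ((h2.trans h1.symm)).symm hbne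
          apply hab
          have hea1 : b.2 = a.1 := by rw [hb2, ha1, h1, h2]
          rw [hea1]
          exact mem_closedNbhd_self
      have hmemP : ∀ y ∈ cr.map φ, y ∈ Finset.univ.powersetCard 2 := by
        intro y hy
        simp only [List.mem_map] at hy
        obtain ⟨x, hx, rfl⟩ := hy
        obtain ⟨_, _, hne⟩ := hshape x hx
        rw [Finset.mem_powersetCard]
        exact ⟨Finset.subset_univ _, Finset.card_pair hne⟩
      have h1 : (cr.map φ).toFinset ⊆ Finset.univ.powersetCard 2 := by
        intro y hy
        exact hmemP y (List.mem_toFinset.mp hy)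
      have h2 := Finset.card_le_card h1
      rw [List.toFinset_card_of_nodup hnd] at h2
      rw [Finset.card_powersetCard, Finset.card_univ, Fintype.card_fin] at h2
      simpa using h2
    calc s.length = (∑ c : Fin p, (it c).length) + cr.length := hlen
      _ ≤ (∑ _c : Fin p, gdn p n) + p.choose 2 := by
          exact Nat.add_le_add (Finset.sum_le_sum fun c _ => hint c) hcross
      _ = p * gdn p n + p.choose 2 := by
          rw [Finset.sum_const, Finset.card_univ, Fintype.card_fin, smul_eq_mul]
      _ = gdn p (n+1) := (gdn_succ hp hn).symm

end GrundySier
end Part3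
section Part4
namespace GrundySier
variable {p : ℕ}

lemma cst_cons {m : ℕ} (j : Fin p) :
    (Fin.cons j (cst p m j) : Fin (m+1) → Fin p) = cst p (m+1) j := by
  funext t
  rcases Fin.eq_zero_or_eq_succ t with rfl | ⟨s, rfl⟩
  · simp [cst]
  · simp [cst]

lemma cst_apply {m : ℕ} (j : Fin p) (t : Fin m) : cst p m j t = j := rfl

lemma cst_inj {m : ℕ} {j j' : Fin p} (h : cst p (m+1) j = cst p (m+1) j') : j = j' := by
  have := congrFun h 0
  simpa [cst] using this

lemma cons_eq_cst {m : ℕ} {k j : Fin p} {w : Fin (m+1) → Fin p}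
    (h : (Fin.cons k w : Fin (m+2) → Fin p) = cst p (m+2) j) :
    k = j ∧ w = cst p (m+1) j := by
  rw [← cst_cons j] at h
  exact cons_eq_cons.mp h

lemma pairwise_flatMap {α β : Type*} {R : β → β → Prop} {l : List α} {f : α → List β}
    (h1 : ∀ a ∈ l, (f a).Pairwise R)
    (h2 : l.Pairwise (fun a b => ∀ x ∈ f a, ∀ y ∈ f b, R x y)) :
    (l.flatMap f).Pairwise R := by
  induction l with
  | nil => simp
  | cons a tl ih =>
    rw [List.flatMap_cons, List.pairwise_append]
    refine ⟨h1 a (by simp), ih (fun b hb => h1 b (by simp [hb]))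
      (List.pairwise_cons.mp h2).2, ?_⟩
    intro x hx y hy
    rw [List.mem_flatMap] at hy
    obtain ⟨b, hb, hyb⟩ := hy
    exact (List.pairwise_cons.mp h2).1 b hb x hx y hyb

/-- copy parameter -/
def par (d : ℕ) (i : Fin p) : ℕ := if (i : ℕ) < d then (i : ℕ) + 1 else (i : ℕ)

/-- lifting a (move, footprint) pair of level m+1 into copy `i` of level m+2. -/
def lift (p m : ℕ) (i : Fin p) (x : (Fin (m+1) → Fin p) × Option (Fin (m+1) → Fin p)) :
    (Fin (m+2) → Fin p) × Option (Fin (m+2) → Fin p) :=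
  (Fin.cons i x.1,
    x.2.elim (if x.1 0 = i then none
              else some (Fin.cons (x.1 0) (cst p (m+1) i)))
      (fun u => some (Fin.cons i u)))

lemma par_lt {d : ℕ} {i : Fin p} (h : (i:ℕ) < d) : par d i = (i:ℕ)+1 := if_pos h
lemma par_ge {d : ℕ} {i : Fin p} (h : d ≤ (i:ℕ)) : par d i = (i:ℕ) := if_neg (by omega)
lemma par_bounds (d : ℕ) (i : Fin p) : (i:ℕ) ≤ par d i ∧ par d i ≤ (i:ℕ)+1 := by
  unfold par; split <;> omega

theorem claim (hp : 0 < p) : ∀ n, 1 ≤ n → ∀ d e : ℕ, d ≤ e → 1 ≤ e → e ≤ p → d < p →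
    ∃ s : List ((Fin n → Fin p) × Option (Fin n → Fin p)),
      (s.map Prod.fst).Nodup ∧
      s.length + e = gdn p n + p ∧
      (∀ j : Fin p, e ≤ (j : ℕ) → cst p n j ∈ s.map Prod.fst) ∧
      (∀ x ∈ s, (∃ u, x.2 = some u ∧ u ∈ closedNbhd (sierpinskiGraph p n) x.1 ∧
          ∀ j : Fin p, (j : ℕ) < d → u ≠ cst p n j) ∨
        (∃ j : Fin p, e ≤ (j : ℕ) ∧ x = (cst p n j, none))) ∧
      s.Pairwise (fun a b => ∀ u, b.2 = some u →
        u ∉ closedNbhd (sierpinskiGraph p n) a.1) ∧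
      (∀ u, (∀ j : Fin p, (j : ℕ) < d → u ≠ cst p n j) →
        ∃ v ∈ s.map Prod.fst, u ∈ closedNbhd (sierpinskiGraph p n) v) := by
  refine Nat.le_induction ?_ ?_
  · -- base case n = 1
    intro d e hde he1 hep hdp
    set h0 : ℕ := if d < e then d else 0 with hh0
    have hh0p : h0 < p := by rw [hh0]; split <;> omega
    have hh0e : h0 < e := by rw [hh0]; split <;> omega
    refine ⟨(cst p 1 ⟨h0, hh0p⟩, some (cst p 1 ⟨d, hdp⟩)) ::
      (List.range (p - e)).attach.map
        (fun k => (cst p 1 ⟨e + k.1, by have := List.mem_range.mp k.2; omega⟩,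
          (none : Option (Fin 1 → Fin p)))), ?_, ?_, ?_, ?_, ?_, ?_⟩
    · -- nodup
      rw [List.map_cons, List.nodup_cons]
      constructor
      · intro hmem
        simp only [List.map_map, List.mem_map, Function.comp] at hmem
        obtain ⟨k, _, hk⟩ := hmem
        have h2 := congrArg Fin.val (cst_inj hk)
        simp at h2
        omega
      · rw [List.map_map]
        refine List.Nodup.map ?_ (List.nodup_attach.mpr List.nodup_range)
        intro k1 k2 hk
        simp only [Function.comp] at hk
        have h2 := congrArg Fin.val (cst_inj hk)
        simp at h2
        exact Subtype.ext (by omega)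
    · -- length
      rw [gdn_one]
      simp [List.length_cons]
      omega
    · -- exempt extremes present
      intro j hj
      rw [List.map_cons]
      refine List.mem_cons_of_mem _ ?_
      rw [List.map_map]
      apply List.mem_map.mpr
      refine ⟨⟨(j : ℕ) - e, List.mem_range.mpr (by omega)⟩, List.mem_attach _ _, ?_⟩
      have hje : (⟨e + ((j : ℕ) - e), by omega⟩ : Fin p) = j :=
        Fin.ext (show e + ((j : ℕ) - e) = (j : ℕ) by omega)
      exact congrArg (cst p 1) hje
    · -- element property
      intro x hx
      rcases List.mem_cons.mp hx with rfl | hx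
      · left
        refine ⟨cst p 1 ⟨d, hdp⟩, rfl, mem_cn_one _ _, ?_⟩
        intro j hj hcst
        have h2 := congrArg Fin.val (cst_inj hcst)
        simp at h2
        omega
      · right
        simp only [List.mem_map] at hx
        obtain ⟨k, _, rfl⟩ := hx
        exact ⟨⟨e + k.1, by have := List.mem_range.mp k.2; omega⟩, by simp, rfl⟩
    · -- pairwise
      rw [List.pairwise_cons]
      constructor
      · intro b hb u hu
        simp only [List.mem_map] at hb
        obtain ⟨k, _, rfl⟩ := hb
        simp at hu
      · rw [List.pairwise_map]
        have hnd := List.nodup_attach.mpr (List.nodup_range : (List.range (p - e)).Nodup)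
        exact hnd.imp (fun h => by intro u hu; simp at hu)
    · -- domination
      intro u _
      exact ⟨cst p 1 ⟨h0, hh0p⟩, by simp, mem_cn_one _ _⟩
  · -- inductive step
    intro n hn IH d e hde he1 hep hdp
    obtain ⟨m, rfl⟩ := Nat.exists_eq_succ_of_ne_zero (show n ≠ 0 by omega)
    have hIH : ∀ i : Fin p, ∃ s : List ((Fin (m+1) → Fin p) × Option (Fin (m+1) → Fin p)),
        (s.map Prod.fst).Nodup ∧
        s.length + par e i = gdn p (m+1) + p ∧
        (∀ j : Fin p, par e i ≤ (j : ℕ) → cst p (m+1) j ∈ s.map Prod.fst) ∧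
        (∀ x ∈ s, (∃ u, x.2 = some u ∧ u ∈ closedNbhd (sierpinskiGraph p (m+1)) x.1 ∧
            ∀ j : Fin p, (j : ℕ) < par d i → u ≠ cst p (m+1) j) ∨
          (∃ j : Fin p, par e i ≤ (j : ℕ) ∧ x = (cst p (m+1) j, none))) ∧
        s.Pairwise (fun a b => ∀ u, b.2 = some u →
          u ∉ closedNbhd (sierpinskiGraph p (m+1)) a.1) ∧
        (∀ u, (∀ j : Fin p, (j : ℕ) < par d i → u ≠ cst p (m+1) j) →
          ∃ v ∈ s.map Prod.fst, u ∈ closedNbhd (sierpinskiGraph p (m+1)) v) := by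
      intro i
      have hilt := i.isLt
      refine IH (par d i) (par e i) ?_ ?_ ?_ ?_ <;> unfold par <;> split_ifs <;> omega
    choose t ht1 ht2 ht3 ht4 ht5 ht6 using hIH
    set s : List ((Fin (m+2) → Fin p) × Option (Fin (m+2) → Fin p)) :=
      (List.finRange p).flatMap (fun i => (t i).map (lift p m i)) with hs
    have hfst : s.map Prod.fst = (List.finRange p).flatMap
        (fun i => ((t i).map Prod.fst).map (Fin.cons i)) := by
      rw [hs, List.map_flatMap]
      simp only [List.map_map]
      rfl
    have hmemfst : ∀ (i : Fin p) (v : Fin (m+1) → Fin p), v ∈ (t i).map Prod.fst →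
        (Fin.cons i v : Fin (m+2) → Fin p) ∈ s.map Prod.fst := by
      intro i v hv
      rw [hfst, List.mem_flatMap]
      exact ⟨i, by simp, List.mem_map_of_mem hv⟩
    have hshape : ∀ (i : Fin p), ∀ y ∈ t i,
        (∃ u, y.2 = some u ∧ u ∈ closedNbhd (sierpinskiGraph p (m+1)) y.1 ∧
          (∀ j : Fin p, (j:ℕ) < par d i → u ≠ cst p (m+1) j)) ∨
        (y = (cst p (m+1) i, none) ∧ e ≤ (i:ℕ)) ∨
        (∃ k : Fin p, par e i ≤ (k:ℕ) ∧ k ≠ i ∧ y = (cst p (m+1) k, none)) := by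
      intro i y hy
      rcases ht4 i y hy with h | ⟨k, hk, hyk⟩
      · exact Or.inl h
      · by_cases hki : k = i
        · subst hki
          refine Or.inr (Or.inl ⟨hyk, ?_⟩)
          unfold par at hk; split_ifs at hk <;> omega
        · exact Or.inr (Or.inr ⟨k, hk, hki, hyk⟩)
    have lift_fst : ∀ (i : Fin p) (y : (Fin (m+1) → Fin p) × Option (Fin (m+1) → Fin p)),
        (lift p m i y).1 = Fin.cons i y.1 := fun _ _ => rfl
    have lift_some : ∀ (i : Fin p) (y : (Fin (m+1) → Fin p) × Option (Fin (m+1) → Fin p)) u,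
        y.2 = some u → lift p m i y = (Fin.cons i y.1, some (Fin.cons i u)) := by
      intro i y u hu
      simp [lift, hu]
    have lift_none_self : ∀ (i : Fin p),
        lift p m i (cst p (m+1) i, none) = (Fin.cons i (cst p (m+1) i), none) := by
      intro i
      simp [lift, cst_apply]
    have lift_none_cross : ∀ (i k : Fin p), k ≠ i →
        lift p m i (cst p (m+1) k, none) = (Fin.cons i (cst p (m+1) k),
          some (Fin.cons k (cst p (m+1) i))) := by
      intro i k hki
      simp [lift, cst_apply, hki]
    refine ⟨s, ?_, ?_, ?_, ?_, ?_, ?_⟩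
    · -- nodup
      rw [hfst, List.nodup_flatMap]
      constructor
      · intro i _
        exact List.Nodup.map (fun a b h => (cons_eq_cons.mp h).2) (ht1 i)
      · refine (List.pairwise_lt_finRange p).imp ?_
        intro i j hij x hxi hxj
        obtain ⟨a, _, rfl⟩ := List.mem_map.mp hxi
        obtain ⟨b, _, hba⟩ := List.mem_map.mp hxj
        exact absurd (cons_eq_cons.mp hba.symm).1 (Fin.ne_of_lt hij)
    · -- length
      have hlen : s.length = ∑ i : Fin p, (t i).length := by
        rw [hs, List.length_flatMap, Fin.sum_univ_def]
        congr 1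
        simp [Function.comp]
      have hsum : (∑ i : Fin p, (t i).length) + (∑ i : Fin p, par e i)
          = p * (gdn p (m+1) + p) := by
        rw [← Finset.sum_add_distrib, Finset.sum_congr rfl (fun i _ => ht2 i),
          Finset.sum_const, Finset.card_univ, Fintype.card_fin, smul_eq_mul]
      have hE : (∑ i : Fin p, par e i) = (∑ i ∈ Finset.range p, i) + e := by
        have hpar : ∀ i : Fin p, par d i = par d i := fun _ => rfl
        have h1 : ∀ i : Fin p, par e i = (i:ℕ) + (if (i:ℕ) < e then 1 else 0) := by
          intro i; unfold par; split <;> omega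
        rw [Finset.sum_congr rfl (fun i _ => h1 i), Finset.sum_add_distrib]
        congr 1
        · exact Fin.sum_univ_eq_sum_range (fun i => i) p
        · rw [Fin.sum_univ_eq_sum_range (fun i => if i < e then 1 else 0) p,
            Finset.sum_boole]
          have : (Finset.range p).filter (fun i => i < e) = Finset.range e := by
            ext x; simp only [Finset.mem_filter, Finset.mem_range]; omega
          rw [this, Finset.card_range]
          rfl
      have h2T := Finset.sum_range_id_mul_two p
      have hCdvd : (2:ℕ) ∣ p * (p - 1) := by simpa using two_dvd_aux p 1
      have h2C : p * (p - 1) / 2 * 2 = p * (p - 1) := Nat.div_mul_cancel hCdvd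
      have hmul : p * (gdn p (m+1) + p) = p * gdn p (m+1) + p * p := Nat.mul_add _ _ _
      have hps : p * p = p * (p - 1) + p := by
        have h : p - 1 + 1 = p := by omega
        calc p * p = p * ((p-1) + 1) := by rw [h]
          _ = p * (p-1) + p := by ring
      rw [gdn_succ (by omega : 1 ≤ p) (by omega : 1 ≤ m + 1), Nat.choose_two_right]
      omega
    · -- exempt extremes present
      intro j hj
      have h1 : cst p (m+1) j ∈ (t j).map Prod.fst :=
        ht3 j j (le_of_eq (par_ge hj))
      have h2 := hmemfst j _ h1
      rwa [cst_cons] at h2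
    · -- element property
      intro x hx
      rw [hs, List.mem_flatMap] at hx
      obtain ⟨i, _, hx⟩ := hx
      obtain ⟨y, hy, rfl⟩ := List.mem_map.mp hx
      rcases hshape i y hy with ⟨u, hu, humem, hud⟩ | ⟨rfl, hie⟩ | ⟨k, hk1, hk2, rfl⟩
      · left
        rw [lift_some i y u hu]
        refine ⟨Fin.cons i u, rfl, mem_cn_cons_same.mpr humem, ?_⟩
        intro j hj hequ
        obtain ⟨hij, hucst⟩ := cons_eq_cst hequ
        exact hud j (by rw [← hij] at hj ⊢; rw [par_lt hj]; omega) hucst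
      · right
        refine ⟨i, hie, ?_⟩
        rw [lift_none_self i]
        rw [cst_cons]
      · left
        rw [lift_none_cross i k hk2]
        refine ⟨Fin.cons k (cst p (m+1) i), rfl,
          (mem_cn_cons_ne (Ne.symm hk2)).mpr ⟨rfl, rfl⟩, ?_⟩
        intro j hj hequ
        obtain ⟨hkj, hcst⟩ := cons_eq_cst hequ
        exact hk2 (hkj.trans (cst_inj hcst).symm)
    · -- pairwise
      rw [hs]
      apply pairwise_flatMap
      · intro i _
        rw [List.pairwise_map]
        have hP := (ht5 i).and (List.pairwise_map.mp (ht1 i))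
        refine hP.imp_of_mem ?_
        rintro a b ha hb ⟨hRab, hne⟩ u hu hmem
        rw [lift_fst] at hmem
        rcases hshape i b hb with ⟨ub, hub, _, _⟩ | ⟨rfl, _⟩ | ⟨k, hk1, hk2, rfl⟩
        · rw [lift_some i b ub hub] at hu
          obtain rfl := Option.some.inj hu
          exact hRab ub hub (mem_cn_cons_same.mp hmem)
        · rw [lift_none_self i] at hu
          exact absurd hu (by simp)
        · rw [lift_none_cross i k hk2] at hu
          obtain rfl := Option.some.inj hu
          rw [mem_cn_cons_ne (Ne.symm hk2)] at hmem
          exact hne hmem.1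
      · refine (List.pairwise_lt_finRange p).imp_of_mem ?_
        intro i j _ _ hij x hxi y hyj u hu hmem
        obtain ⟨a, ha, rfl⟩ := List.mem_map.mp hxi
        obtain ⟨b, hb, rfl⟩ := List.mem_map.mp hyj
        have hijne : i ≠ j := Fin.ne_of_lt hij
        have hijlt : (i:ℕ) < (j:ℕ) := hij
        rw [lift_fst] at hmem
        rcases hshape j b hb with ⟨ub, hub, _, hubd⟩ | ⟨rfl, _⟩ | ⟨k, hk1, hk2, rfl⟩
        · rw [lift_some j b ub hub] at hu
          obtain rfl := Option.some.inj hu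
          rw [mem_cn_cons_ne hijne] at hmem
          exact hubd i (by have := (par_bounds d j).1; omega) hmem.2
        · rw [lift_none_self j] at hu
          exact absurd hu (by simp)
        · rw [lift_none_cross j k hk2] at hu
          obtain rfl := Option.some.inj hu
          have hkj : (j:ℕ) ≤ (k:ℕ) := le_trans (par_bounds e j).1 hk1
          have hkne : i ≠ k := by
            intro h
            rw [h] at hijlt
            omega
          rw [mem_cn_cons_ne hkne] at hmem
          exact hijne (cst_inj hmem.2).symm
    · -- domination
      intro u hu
      have hu0 : u = Fin.cons (u 0) (Fin.tail u) := (Fin.cons_self_tail u).symm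
      by_cases hw : ∀ j : Fin p, (j:ℕ) < par d (u 0) → Fin.tail u ≠ cst p (m+1) j
      · obtain ⟨v, hv, hvm⟩ := ht6 (u 0) (Fin.tail u) hw
        refine ⟨Fin.cons (u 0) v, hmemfst (u 0) v hv, ?_⟩
        rw [hu0]
        exact mem_cn_cons_same.mpr hvm
      · push_neg at hw
        obtain ⟨j, hj1, hj2⟩ := hw
        by_cases hji : (j:ℕ) = ((u 0 : Fin p) :ℕ)
        · exfalso
          have hje : j = u 0 := Fin.ext hji
          have hid : (j:ℕ) < d := by
            by_contra hcon
            rw [hje, par_ge (by omega : d ≤ ((u 0 : Fin p):ℕ))] at hj1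
            omega
          apply hu j hid
          rw [hu0, hj2, ← hje, cst_cons]
        · have hjlt : (j:ℕ) < ((u 0 : Fin p):ℕ) := by
            have := (par_bounds d (u 0)).2
            omega
          have hmem1 : cst p (m+1) (u 0) ∈ (t j).map Prod.fst :=
            ht3 j (u 0) (by have := (par_bounds e j).2; omega)
          refine ⟨Fin.cons j (cst p (m+1) (u 0)), hmemfst j _ hmem1, ?_⟩
          rw [hu0, hj2]
          exact (mem_cn_cons_ne (show j ≠ u 0 from fun h => hji (congrArg Fin.val h))).mpr
            ⟨rfl, rfl⟩

end GrundySier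
end Part4
section Part5
namespace GrundySier
variable {p : ℕ}

theorem grundy_eq (hp : 0 < p) {n : ℕ} (hn : 1 ≤ n) :
    grundyDomNum (sierpinskiGraph p n) = gdn p n := by
  have hub : ∀ k ∈ {k : ℕ | ∃ l : List (Fin n → Fin p),
      IsDomSeq (sierpinskiGraph p n) l ∧ l.length = k}, k ≤ gdn p n := by
    rintro k ⟨l, hl, rfl⟩
    obtain ⟨st, hst, hlen⟩ := legal_to_stair hl.1
    rw [← hlen]
    exact stair_length_le hp n hn st hst
  have hmem : gdn p n ∈ {k : ℕ | ∃ l : List (Fin n → Fin p),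
      IsDomSeq (sierpinskiGraph p n) l ∧ l.length = k} := by
    obtain ⟨s, h1, h2, h3, h4, h5, h6⟩ :=
      claim hp n hn 0 p (by omega) (by omega) le_rfl (by omega)
    refine ⟨s.map Prod.fst, ⟨⟨h1, ?_⟩, ?_⟩, by simpa using (by omega : s.length = gdn p n)⟩
    · -- legality
      intro i
      have hi : (i : ℕ) < s.length := by
        have := i.isLt
        simpa using this
      have hget : (s.map Prod.fst).get i = (s[(i : ℕ)]'hi).1 := by
        simp [List.get_eq_getElem]
      have helem := h4 (s[(i : ℕ)]'hi) (List.getElem_mem hi)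
      rcases helem with ⟨u, hu, hum, _⟩ | ⟨j, hj, _⟩
      · refine ⟨u, ?_, ?_⟩
        · rw [hget]; exact hum
        · intro j' hj' humem
          have hj'lt : (j' : ℕ) < s.length := by
            have := j'.isLt
            simpa using this
          have hpw := List.pairwise_iff_get.mp h5 ⟨(j' : ℕ), hj'lt⟩ ⟨(i : ℕ), hi⟩ hj'
          refine hpw u hu ?_
          have hget' : (s.map Prod.fst).get j' = (s[(j' : ℕ)]'hj'lt).1 := by
            simp [List.get_eq_getElem]
          rw [hget'] at humem
          exact humem
      · exact absurd hj (by have := j.isLt; omega)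
    · -- domination
      intro u
      exact h6 u (fun j hj => absurd hj (by omega))
  exact le_antisymm (csSup_le ⟨_, hmem⟩ hub) (le_csSup ⟨gdn p n, hub⟩ hmem)

end GrundySier
end Part5

theorem grundy_sierpinski (p n : ℕ) (hp : 1 ≤ p) (hn : 1 ≤ n) :
    grundyDomNum (sierpinskiGraph p n) = p ^ (n - 1) + p * (p ^ (n - 1) - 1) / 2 := by
  exact GrundySier.grundy_eq (by omega) hn
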